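/- For every pair μ₁, μ₂ of idempotent probability measures on a compact Hausdorff space X, there exists a (μ₁, μ₂)-admissible idempotent probability measure ξ on X × X; that is, the set Λ(μ₁, μ₂) is nonempty. -/

import Mathlib

noncomputable section

/-- An idempotent probability measure on a topological space `X`:
a functional `μ : C(X, ℝ) → ℝ` which sends constants to their values,
is `max`-`plus` homogeneous, and turns pointwise maxima into maxima. -/
def IsIPM {X : Type*} [TopologicalSpace X] (μ : C(X, ℝ) → ℝ) : Prop :=
  (∀ c : ℝ, μ (ContinuousMap.const X c) = c) ∧
  (∀ (c : ℝ) (φ : C(X, ℝ)), μ (ContinuousMap.const X c + φ) = c + μ φ) ∧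
  (∀ φ ψ : C(X, ℝ), μ (φ ⊔ ψ) = max (μ φ) (μ ψ))

/-- `ξ` is a `(μ₁, μ₂)`-admissible idempotent probability measure on `X × X`. -/
def IsAdmissible {X : Type*} [TopologicalSpace X]
    (μ₁ μ₂ : C(X, ℝ) → ℝ) (ξ : C(X × X, ℝ) → ℝ) : Prop :=
  IsIPM ξ ∧
  (∀ φ : C(X, ℝ), ξ (φ.comp ⟨Prod.fst, continuous_fst⟩) = μ₁ φ) ∧
  (∀ φ : C(X, ℝ), ξ (φ.comp ⟨Prod.snd, continuous_snd⟩) = μ₂ φ)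

/-- The density of an idempotent probability measure. -/
def idemDensity {Z : Type*} [TopologicalSpace Z] (μ : C(Z, ℝ) → ℝ) (z : Z) : EReal :=
  sInf {r : EReal | ∃ φ : C(Z, ℝ), φ ≤ 0 ∧ φ z = 0 ∧ r = (μ φ : EReal)}

/-- The support of an idempotent probability measure. -/
def idemSupp {Z : Type*} [TopologicalSpace Z] (μ : C(Z, ℝ) → ℝ) : Set Z :=
  {z | ⊥ < idemDensity μ z}

/-- The metric `ρ` of a metric space `X`, as a continuous function on `X × X`. -/
def rhoFun (X : Type*) [MetricSpace X] : C(X × X, ℝ) :=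
  ⟨fun p => dist p.1 p.2, continuous_dist⟩

/-- The Uspenskii-type distance function `d_I` on idempotent probability measures. -/
def dI {X : Type*} [MetricSpace X] (μ₁ μ₂ : C(X, ℝ) → ℝ) : ℝ :=
  sInf {r : ℝ | ∃ ξ : C(X × X, ℝ) → ℝ, IsAdmissible μ₁ μ₂ ξ ∧ r = ξ (rhoFun X)}

/-- The distance function `ρ_I` on idempotent probability measures. -/
def rhoI {X : Type*} [MetricSpace X] (μ₁ μ₂ : C(X, ℝ) → ℝ) : ℝ :=
  sInf {r : ℝ | ∃ ξ : C(X × X, ℝ) → ℝ, IsAdmissible μ₁ μ₂ ξ ∧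
    r = sSup {s : ℝ | ∃ p ∈ idemSupp ξ, s = max (ξ (rhoFun X)) (dist p.1 p.2)}}

lemma ipm_mono {Z : Type*} [TopologicalSpace Z] {μ : C(Z, ℝ) → ℝ} (h : IsIPM μ)
    {f g : C(Z, ℝ)} (hfg : f ≤ g) : μ f ≤ μ g := by
  have h1 : f ⊔ g = g := sup_eq_right.mpr hfg
  have h2 := h.2.2 f g
  rw [h1] at h2
  rw [h2]; exact le_max_left _ _

lemma ipm_lipschitz {Z : Type*} [TopologicalSpace Z] [CompactSpace Z]
    {μ : C(Z, ℝ) → ℝ} (h : IsIPM μ) : LipschitzWith 1 μ := by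
  apply LipschitzWith.of_dist_le_mul
  intro f g
  simp only [NNReal.coe_one, one_mul]
  have key : ∀ f g : C(Z, ℝ), μ f - μ g ≤ dist f g := by
    intro f g
    have hle : f ≤ ContinuousMap.const Z (dist f g) + g := by
      intro z
      have := ContinuousMap.dist_apply_le_dist (f := f) (g := g) z
      have : f z - g z ≤ dist f g := (abs_le.mp (by rwa [Real.dist_eq] at this)).2
      simpa [ContinuousMap.coe_const] using by linarith
    have := ipm_mono h hle
    rw [h.2.1] at this
    linarith
  rw [Real.dist_eq, abs_le]
  constructor
  · have := key g f; rw [dist_comm] at this; linarith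
  · exact key f g

lemma inner_cont {X : Type*} [TopologicalSpace X] [CompactSpace X]
    {μ₂ : C(X, ℝ) → ℝ} (h₂ : IsIPM μ₂) (φ : C(X × X, ℝ)) :
    Continuous fun x => μ₂ (φ.curry x) :=
  (ipm_lipschitz h₂).continuous.comp φ.curry.continuous

def innerMap {X : Type*} [TopologicalSpace X] [CompactSpace X]
    {μ₂ : C(X, ℝ) → ℝ} (h₂ : IsIPM μ₂) (φ : C(X × X, ℝ)) : C(X, ℝ) :=
  ⟨fun x => μ₂ (φ.curry x), inner_cont h₂ φ⟩


theorem stmt5 {X : Type*} [TopologicalSpace X] [CompactSpace X] [T2Space X]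
    (μ₁ μ₂ : C(X, ℝ) → ℝ) (h₁ : IsIPM μ₁) (h₂ : IsIPM μ₂) :
    ∃ ξ : C(X × X, ℝ) → ℝ, IsAdmissible μ₁ μ₂ ξ := by
  refine ⟨fun φ => μ₁ (innerMap h₂ φ), ⟨?_, ?_, ?_⟩, ?_, ?_⟩
  · intro c
    have : innerMap h₂ (ContinuousMap.const (X × X) c) = ContinuousMap.const X c := by
      ext x
      have : (ContinuousMap.const (X × X) c).curry x = ContinuousMap.const X c := by
        ext y; simp [ContinuousMap.curry_apply]
      simp [innerMap, this, h₂.1]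
    dsimp only
    rw [this, h₁.1]
  · intro c φ
    have : innerMap h₂ (ContinuousMap.const (X × X) c + φ)
        = ContinuousMap.const X c + innerMap h₂ φ := by
      ext x
      have hc : (ContinuousMap.const (X × X) c + φ).curry x
          = ContinuousMap.const X c + φ.curry x := by
        ext y; simp [ContinuousMap.curry_apply]
      show μ₂ ((ContinuousMap.const (X × X) c + φ).curry x) = c + μ₂ (φ.curry x)
      rw [hc, h₂.2.1]
    dsimp only
    rw [this, h₁.2.1]
  · intro φ ψ
    have : innerMap h₂ (φ ⊔ ψ) = innerMap h₂ φ ⊔ innerMap h₂ ψ := by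
      ext x
      have hc : (φ ⊔ ψ).curry x = φ.curry x ⊔ ψ.curry x := by
        ext y; simp [ContinuousMap.curry_apply]
      simp [innerMap, hc, h₂.2.2]
    dsimp only
    rw [this, h₁.2.2]
  · intro φ
    have : innerMap h₂ (φ.comp ⟨Prod.fst, continuous_fst⟩) = φ := by
      ext x
      have : (φ.comp ⟨Prod.fst, continuous_fst⟩).curry x = ContinuousMap.const X (φ x) := by
        ext y; simp [ContinuousMap.curry_apply]
      simp [innerMap, this, h₂.1]
    dsimp only
    rw [this]
  · intro φ
    have : innerMap h₂ (φ.comp ⟨Prod.snd, continuous_snd⟩) = ContinuousMap.const X (μ₂ φ) := by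
      ext x
      have : (φ.comp ⟨Prod.snd, continuous_snd⟩).curry x = φ := by
        ext y; simp [ContinuousMap.curry_apply]
      simp [innerMap, this]
    dsimp only
    rw [this, h₁.1]
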